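/- Let p ≥ 2 be an integer and set r = 2^(1/(p−1)). Then M₂^p ⊆ D̄₂(0; r, r) ⊆ B̄₂(0, r), where D̄₂(0; r₁, r₂) = {(z₁,z₂) ∈ 𝕄(2) : |z₁ − i·z₂| ≤ r₁ and |z₁ + i·z₂| ≤ r₂} is the closed discus and B̄₂(0, r) = {ζ ∈ 𝕄(2) : ‖ζ‖₂ ≤ r} is the closed ball. -/

import Mathlib

/-- Bicomplex multiplication on ℂ × ℂ. -/
def bcMul (z w : ℂ × ℂ) : ℂ × ℂ := (z.1 * w.1 - z.2 * w.2, z.1 * w.2 + z.2 * w.1)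

/-- n-th power of a bicomplex number. -/
def bcPow (z : ℂ × ℂ) : ℕ → ℂ × ℂ
  | 0 => (1, 0)
  | n + 1 => bcMul (bcPow z n) z

/-- The bicomplex norm ‖(z₁,z₂)‖₂ = √(|z₁|² + |z₂|²). -/
noncomputable def bcNorm (z : ℂ × ℂ) : ℝ :=
  Real.sqrt (‖z.1‖ ^ 2 + ‖z.2‖ ^ 2)

/-- The bicomplex polynomial Q_{p,c}(ζ) = ζ^p + c. -/
def bcQ (p : ℕ) (c : ℂ × ℂ) (z : ℂ × ℂ) : ℂ × ℂ := bcPow z p + c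

/-- The bicomplex Multibrot set M₂^p. -/
def M2 (p : ℕ) : Set (ℂ × ℂ) :=
  {c | ∃ M : ℝ, ∀ m : ℕ, 1 ≤ m → bcNorm ((bcQ p c)^[m] (0, 0)) ≤ M}

/-! Auxiliary machinery -/

def phi (u : ℂ) (z : ℂ × ℂ) : ℂ := z.1 + u * z.2

lemma phi_bcMul (u : ℂ) (hu : u * u = -1) (z w : ℂ × ℂ) :
    phi u (bcMul z w) = phi u z * phi u w := by
  simp only [phi, bcMul]
  linear_combination (-(z.2 * w.2)) * hu

lemma phi_bcPow (u : ℂ) (hu : u * u = -1) (z : ℂ × ℂ) (n : ℕ) :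
    phi u (bcPow z n) = (phi u z) ^ n := by
  induction n with
  | zero => simp [bcPow, phi]
  | succ n ih => rw [bcPow, phi_bcMul u hu, ih, pow_succ]

lemma phi_add (u : ℂ) (z w : ℂ × ℂ) : phi u (z + w) = phi u z + phi u w := by
  simp [phi]; ring

lemma phi_iter (u : ℂ) (hu : u * u = -1) (p : ℕ) (c : ℂ × ℂ) (m : ℕ) :
    phi u ((bcQ p c)^[m] (0, 0)) = (fun w => w ^ p + phi u c)^[m] 0 := by
  induction m with
  | zero => simp [phi]
  | succ n ih =>
      rw [Function.iterate_succ_apply', Function.iterate_succ_apply', bcQ,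
        phi_add, phi_bcPow u hu, ih]

lemma abs_fst_le (z : ℂ × ℂ) : ‖z.1‖ ≤ bcNorm z := by
  rw [bcNorm]
  calc ‖z.1‖ = Real.sqrt (‖z.1‖ ^ 2) := by
        rw [Real.sqrt_sq (norm_nonneg _)]
    _ ≤ _ := Real.sqrt_le_sqrt (le_add_of_nonneg_right (by positivity))

lemma abs_snd_le (z : ℂ × ℂ) : ‖z.2‖ ≤ bcNorm z := by
  rw [bcNorm]
  calc ‖z.2‖ = Real.sqrt (‖z.2‖ ^ 2) := by
        rw [Real.sqrt_sq (norm_nonneg _)]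
    _ ≤ _ := Real.sqrt_le_sqrt (le_add_of_nonneg_left (by positivity))

lemma abs_phi_le (u : ℂ) (hu : ‖u‖ = 1) (z : ℂ × ℂ) :
    ‖phi u z‖ ≤ 2 * bcNorm z := by
  calc ‖phi u z‖ ≤ ‖z.1‖ + ‖u * z.2‖ :=
        norm_add_le _ _
    _ = ‖z.1‖ + ‖z.2‖ := by rw [norm_mul, hu, one_mul]
    _ ≤ 2 * bcNorm z := by
        have h1 := abs_fst_le z; have h2 := abs_snd_le z; linarith

/-- The classical complex escape bound. -/
lemma escape (p : ℕ) (hp : 2 ≤ p) (c : ℂ) (B : ℝ)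
    (hB : ∀ m : ℕ, 1 ≤ m → ‖(fun w => w ^ p + c)^[m] 0‖ ≤ B) :
    ‖c‖ ^ (p - 1) ≤ 2 := by
  by_contra h
  push_neg at h
  set a := ‖c‖ with ha
  have ha0 : 0 < a := by
    rcases lt_or_eq_of_le (norm_nonneg c) with h' | h'
    · exact h'
    · exfalso
      have ha' : a = 0 := by rw [ha, ← h']
      rw [ha', zero_pow (by omega : p - 1 ≠ 0)] at h; linarith
  set q := a ^ (p - 1) - 1 with hqdef
  have hq : 1 < q := by simp only [hqdef]; linarith
  have hq0 : (0:ℝ) < q := by linarith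
  have key : ∀ m : ℕ, a * q ^ m ≤ ‖(fun w => w ^ p + c)^[m + 1] 0‖ := by
    intro m
    induction m with
    | zero => simp [zero_pow (by omega : p ≠ 0), ha]
    | succ n ih =>
        set z := (fun w => w ^ p + c)^[n + 1] (0:ℂ) with hz
        have hqn : (1:ℝ) ≤ q ^ n := by simpa using pow_le_pow_left₀ (by norm_num) hq.le n
        have haz : a ≤ ‖z‖ := by nlinarith
        have h1 : ‖z‖ ^ p - a ≤ ‖z ^ p + c‖ := by
          have h2 : ‖z ^ p‖ ≤ ‖z ^ p + c‖ + ‖-c‖ := by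
            calc ‖z ^ p‖ = ‖(z ^ p + c) + (-c)‖ := by ring_nf
              _ ≤ _ := norm_add_le _ _
          rw [norm_neg, norm_pow] at h2; linarith
        have hple : a ^ (p - 1) ≤ ‖z‖ ^ (p - 1) :=
          pow_le_pow_left₀ ha0.le haz _
        have hp1 : p - 1 + 1 = p := by omega
        have hzp : ‖z‖ ^ p = ‖z‖ * ‖z‖ ^ (p - 1) := by
          rw [← pow_succ', hp1]
        rw [Function.iterate_succ_apply', ← hz]
        calc a * q ^ (n + 1) = (a * q ^ n) * q := by ring
          _ ≤ ‖z‖ * q := mul_le_mul_of_nonneg_right ih hq0.le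
          _ ≤ ‖z‖ * (‖z‖ ^ (p - 1) - 1) := by
              apply mul_le_mul_of_nonneg_left _ (norm_nonneg z)
              simp only [hqdef]; linarith
          _ = ‖z‖ ^ p - ‖z‖ := by rw [hzp]; ring
          _ ≤ ‖z‖ ^ p - a := by linarith
          _ ≤ ‖z ^ p + c‖ := h1
  obtain ⟨n, hn⟩ := pow_unbounded_of_one_lt (B / a) hq
  have h3 := hB (n + 1) (by omega)
  have h4 := key n
  rw [div_lt_iff₀ ha0] at hn
  nlinarith

lemma abs_le_r_of_pow (p : ℕ) (hp : 2 ≤ p) (r : ℝ)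
    (hr : r = (2 : ℝ) ^ ((1 : ℝ) / ((p : ℝ) - 1))) (a : ℝ) (ha : 0 ≤ a)
    (h : a ^ (p - 1) ≤ 2) : a ≤ r := by
  have hpR : (2:ℝ) ≤ (p:ℝ) := by exact_mod_cast hp
  have hcast : ((p - 1 : ℕ) : ℝ) = (p : ℝ) - 1 := by
    rw [Nat.cast_sub (by omega : 1 ≤ p), Nat.cast_one]
  have hne : (p : ℝ) - 1 ≠ 0 := by linarith
  have hr2 : r ^ (p - 1) = 2 := by
    rw [hr, ← Real.rpow_natCast ((2:ℝ) ^ ((1:ℝ) / ((p:ℝ) - 1))) (p - 1),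
      ← Real.rpow_mul (by norm_num), hcast, one_div, inv_mul_cancel₀ hne, Real.rpow_one]
  have hr0 : 0 ≤ r := by rw [hr]; positivity
  by_contra hcon
  push_neg at hcon
  have := pow_lt_pow_left₀ hcon hr0 (by omega : p - 1 ≠ 0)
  rw [hr2] at this
  linarith

theorem bicomplex_multibrot_subset_discus (p : ℕ) (hp : 2 ≤ p)
    (r : ℝ) (hr : r = (2 : ℝ) ^ ((1 : ℝ) / ((p : ℝ) - 1))) :
    M2 p ⊆ {z : ℂ × ℂ | ‖z.1 - Complex.I * z.2‖ ≤ r ∧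
        ‖z.1 + Complex.I * z.2‖ ≤ r} ∧
    {z : ℂ × ℂ | ‖z.1 - Complex.I * z.2‖ ≤ r ∧
        ‖z.1 + Complex.I * z.2‖ ≤ r} ⊆ {z : ℂ × ℂ | bcNorm z ≤ r} := by
  constructor
  · intro c hc
    obtain ⟨M, hM⟩ := hc
    have main : ∀ u : ℂ, u * u = -1 → ‖u‖ = 1 →
        ‖c.1 + u * c.2‖ ≤ r := by
      intro u huu hu1
      have hesc : ‖phi u c‖ ^ (p - 1) ≤ 2 := by
        apply escape p hp (phi u c) (2 * M)
        intro m hm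
        rw [← phi_iter u huu p c m]
        calc ‖phi u ((bcQ p c)^[m] (0, 0))‖
            ≤ 2 * bcNorm ((bcQ p c)^[m] (0, 0)) := abs_phi_le u hu1 _
          _ ≤ 2 * M := by linarith [hM m hm]
      exact abs_le_r_of_pow p hp r hr _ (norm_nonneg _) hesc
    constructor
    · have := main (-Complex.I) (by simp [Complex.I_mul_I]) (by simp)
      rwa [neg_mul, ← sub_eq_add_neg] at this
    · exact main Complex.I Complex.I_mul_I (by simp)
  · rintro z ⟨h1, h2⟩
    have hr0 : 0 ≤ r := by rw [hr]; positivity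
    have key : ‖z.1 - Complex.I * z.2‖ ^ 2 +
        ‖z.1 + Complex.I * z.2‖ ^ 2 =
        2 * (‖z.1‖ ^ 2 + ‖z.2‖ ^ 2) := by
      simp only [← Complex.normSq_eq_norm_sq, Complex.normSq_apply, Complex.sub_re,
        Complex.sub_im, Complex.add_re, Complex.add_im, Complex.mul_re, Complex.mul_im,
        Complex.I_re, Complex.I_im]
      ring
    show bcNorm z ≤ r
    rw [bcNorm]
    have hle : ‖z.1‖ ^ 2 + ‖z.2‖ ^ 2 ≤ r ^ 2 := by
      nlinarith [norm_nonneg (z.1 - Complex.I * z.2),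
        norm_nonneg (z.1 + Complex.I * z.2)]
    calc Real.sqrt (‖z.1‖ ^ 2 + ‖z.2‖ ^ 2)
        ≤ Real.sqrt (r ^ 2) := Real.sqrt_le_sqrt hle
      _ = r := Real.sqrt_sq hr0
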